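/- Let X be a pointed metric space. A subset of Lip₀(X) is τ_γ-compact if and only if it is norm bounded and τ₀-compact; the same equivalence holds with 'compact' replaced by 'precompact' and by 'relatively compact'. -/

import Mathlib

open Filter Topology Set Pointwise

set_option linter.unusedSectionVars false
set_option linter.unusedVariables false

noncomputable section

namespace LipApprox

variable (X : Type*) [MetricSpace X] (x₀ : X)
variable (F : Type*) [NormedAddCommGroup F] [NormedSpace ℝ F]

/-- The Lipschitz maps `X → F` vanishing at the base point, as a submodule of `X → F`. -/
def lip0Submodule : Submodule ℝ (X → F) where
  carrier := {f | (∃ K, LipschitzWith K f) ∧ f x₀ = 0}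
  add_mem' := by
    rintro f g ⟨⟨Kf, hf⟩, hf0⟩ ⟨⟨Kg, hg⟩, hg0⟩
    exact ⟨⟨Kf + Kg, hf.add hg⟩, by simp [hf0, hg0]⟩
  zero_mem' := ⟨⟨0, LipschitzWith.const 0⟩, rfl⟩
  smul_mem' := by
    rintro c f ⟨⟨K, hf⟩, hf0⟩
    exact ⟨⟨‖c‖₊ * K, (lipschitzWith_smul c).comp hf⟩, by simp [hf0]⟩

/-- The space `Lip₀(X, F)` of Lipschitz maps from `X` to `F` vanishing at the base point. -/
def lip0 : Type _ := ↥(lip0Submodule X x₀ F)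

instance : AddCommGroup (lip0 X x₀ F) :=
  inferInstanceAs (AddCommGroup ↥(lip0Submodule X x₀ F))

instance : Module ℝ (lip0 X x₀ F) :=
  inferInstanceAs (Module ℝ ↥(lip0Submodule X x₀ F))

variable {X x₀ F}

/-- The underlying function of an element of `Lip₀(X, F)`. -/
def toFun' (f : lip0 X x₀ F) : X → F := f.1

lemma exists_lip (f : lip0 X x₀ F) : ∃ K, LipschitzWith K (toFun' f) := f.2.1

lemma apply_base (f : lip0 X x₀ F) : toFun' f x₀ = 0 := f.2.2

lemma toFun'_add (f g : lip0 X x₀ F) : toFun' (f + g) = toFun' f + toFun' g := rfl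
lemma toFun'_neg (f : lip0 X x₀ F) : toFun' (-f) = -toFun' f := rfl
lemma toFun'_smul (c : ℝ) (f : lip0 X x₀ F) : toFun' (c • f) = c • toFun' f := rfl
lemma toFun'_zero : toFun' (0 : lip0 X x₀ F) = 0 := rfl

variable (X x₀ F) in
/-- The Lipschitz norm of an element of `Lip₀(X, F)`. -/
def lipNorm (f : lip0 X x₀ F) : ℝ :=
  ⨆ p : X × X, ‖toFun' f p.1 - toFun' f p.2‖ / dist p.1 p.2

lemma ratio_le (f : lip0 X x₀ F) {K : NNReal} (hK : LipschitzWith K (toFun' f))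
    (p : X × X) : ‖toFun' f p.1 - toFun' f p.2‖ / dist p.1 p.2 ≤ K := by
  rcases eq_or_ne p.1 p.2 with h | h
  · simp [h]
  · rw [div_le_iff₀ (dist_pos.2 h), ← dist_eq_norm]
    exact hK.dist_le_mul p.1 p.2

lemma bddAbove_ratio (f : lip0 X x₀ F) :
    BddAbove (Set.range fun p : X × X =>
      ‖toFun' f p.1 - toFun' f p.2‖ / dist p.1 p.2) := by
  obtain ⟨K, hK⟩ := exists_lip f
  exact ⟨K, by rintro r ⟨p, rfl⟩; exact ratio_le f hK p⟩

lemma nonempty_pairs (x₀ : X) : Nonempty (X × X) := ⟨(x₀, x₀)⟩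

lemma ratio_le_lipNorm (f : lip0 X x₀ F) (p : X × X) :
    ‖toFun' f p.1 - toFun' f p.2‖ / dist p.1 p.2 ≤ lipNorm X x₀ F f :=
  le_ciSup (bddAbove_ratio f) p

lemma lipNorm_nonneg (f : lip0 X x₀ F) : 0 ≤ lipNorm X x₀ F f := by
  have := ratio_le_lipNorm (x₀ := x₀) f (x₀, x₀)
  simpa using this

lemma norm_sub_le_lipNorm (f : lip0 X x₀ F) (x y : X) :
    ‖toFun' f x - toFun' f y‖ ≤ lipNorm X x₀ F f * dist x y := by
  rcases eq_or_ne x y with rfl | h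
  · simp
  · have := ratio_le_lipNorm (x₀ := x₀) f (x, y)
    rw [div_le_iff₀ (dist_pos.2 h)] at this
    simpa using this

instance : NormedAddCommGroup (lip0 X x₀ F) :=
  AddGroupNorm.toNormedAddCommGroup
    { toFun := lipNorm X x₀ F
      map_zero' := by
        haveI : Nonempty (X × X) := nonempty_pairs x₀
        have h0 : ∀ p : X × X,
            ‖toFun' (0 : lip0 X x₀ F) p.1 - toFun' (0 : lip0 X x₀ F) p.2‖ /
              dist p.1 p.2 = 0 := by
          intro p; rw [toFun'_zero]; simp
        simp only [lipNorm, h0, ciSup_const]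
      add_le' := by
        intro f g
        haveI : Nonempty (X × X) := nonempty_pairs x₀
        apply ciSup_le
        intro p
        rcases eq_or_ne p.1 p.2 with h | h
        · simp only [h, dist_self, div_zero]
          exact add_nonneg (lipNorm_nonneg f) (lipNorm_nonneg g)
        · have hnum : ‖toFun' (f + g) p.1 - toFun' (f + g) p.2‖ ≤
              ‖toFun' f p.1 - toFun' f p.2‖ + ‖toFun' g p.1 - toFun' g p.2‖ := by
            rw [toFun'_add, Pi.add_apply, Pi.add_apply, add_sub_add_comm]
            exact norm_add_le _ _
          calc ‖toFun' (f + g) p.1 - toFun' (f + g) p.2‖ / dist p.1 p.2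
              ≤ (‖toFun' f p.1 - toFun' f p.2‖ +
                  ‖toFun' g p.1 - toFun' g p.2‖) / dist p.1 p.2 := by gcongr
            _ = ‖toFun' f p.1 - toFun' f p.2‖ / dist p.1 p.2 +
                  ‖toFun' g p.1 - toFun' g p.2‖ / dist p.1 p.2 := add_div _ _ _
            _ ≤ lipNorm X x₀ F f + lipNorm X x₀ F g :=
                add_le_add (ratio_le_lipNorm f p) (ratio_le_lipNorm g p)
      neg' := by
        intro f
        simp only [lipNorm]
        congr 1
        funext p
        congr 1
        rw [toFun'_neg, Pi.neg_apply, Pi.neg_apply, neg_sub_neg, norm_sub_rev]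
      eq_zero_of_map_eq_zero' := by
        intro f hf
        have hzero : ∀ x : X, toFun' f x = 0 := by
          intro x
          rcases eq_or_ne x x₀ with h | h
          · rw [h]; exact apply_base f
          · have hf' : lipNorm X x₀ F f = 0 := hf
            have h1 := ratio_le_lipNorm (x₀ := x₀) f (x, x₀)
            rw [hf', div_le_iff₀ (dist_pos.2 h), zero_mul] at h1
            have h2 : toFun' f x - toFun' f x₀ = 0 := by
              simpa using norm_le_zero_iff.1 h1
            have h3 := apply_base f
            rw [h3, sub_zero] at h2
            exact h2
        exact Subtype.ext (funext hzero) }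

lemma lip0_norm_def (f : lip0 X x₀ F) : ‖f‖ = lipNorm X x₀ F f := rfl

instance : NormedSpace ℝ (lip0 X x₀ F) where
  norm_smul_le c f := by
    haveI : Nonempty (X × X) := nonempty_pairs x₀
    rw [lip0_norm_def, lip0_norm_def, lipNorm]
    apply ciSup_le
    intro p
    have h1 : toFun' (c • f) p.1 - toFun' (c • f) p.2 =
        c • (toFun' f p.1 - toFun' f p.2) := by
      rw [toFun'_smul, Pi.smul_apply, Pi.smul_apply, smul_sub]
    rw [h1, norm_smul]
    rcases eq_or_ne p.1 p.2 with h | h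
    · simp only [h, dist_self, div_zero]
      exact mul_nonneg (norm_nonneg c) (lipNorm_nonneg f)
    · rw [mul_div_assoc]
      exact mul_le_mul_of_nonneg_left (ratio_le_lipNorm (x₀ := x₀) f p) (norm_nonneg c)

variable (X x₀ F)

/-- Elements of `Lip₀(X, F)` as continuous maps. -/
def toCM (f : lip0 X x₀ F) : C(X, F) :=
  ⟨toFun' f, by
    obtain ⟨K, hK⟩ := exists_lip f
    exact hK.continuous⟩

/-- The compact-open topology `τ₀` on `Lip₀(X, F)`. -/
def tau0 : TopologicalSpace (lip0 X x₀ F) :=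
  TopologicalSpace.induced (toCM X x₀ F) ContinuousMap.compactOpen

/-- The set `γ(U) = ⋃ₙ (U₀ ∩ B + U₁ ∩ 2B + ⋯ + Uₙ ∩ 2ⁿB)` from the definition of the
mixed topology, where `B` is the closed unit ball of `Lip₀(X, F)`. -/
def gammaSet (U : ℕ → Set (lip0 X x₀ F)) : Set (lip0 X x₀ F) :=
  ⋃ n : ℕ, ∑ i ∈ Finset.range (n + 1), (U i ∩ {f | ‖f‖ ≤ 2 ^ i})

/-- The mixed topology `τ_γ = γ[Lip, τ₀]` on `Lip₀(X, F)`: the topology whose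
neighborhoods of a point `f` are generated by the translates by `f` of the sets `γ(U)`,
where `U` runs over all sequences of convex balanced `τ₀`-neighborhoods of zero. -/
def tauGamma : TopologicalSpace (lip0 X x₀ F) :=
  TopologicalSpace.mkOfNhds fun f =>
    ⨅ (U : ℕ → Set (lip0 X x₀ F))
      (_ : ∀ n, U n ∈ @nhds _ (tau0 X x₀ F) 0 ∧ Convex ℝ (U n) ∧ Balanced ℝ (U n)),
      Filter.principal ((f + ·) '' gammaSet X x₀ F U)

/-- A subset of `Lip₀(X, F)` is norm bounded if the Lipschitz norms of its members are
uniformly bounded. -/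
def NormBounded (B : Set (lip0 X x₀ F)) : Prop :=
  ∃ C : ℝ, ∀ f ∈ B, ‖f‖ ≤ C

/-- The locally convex topology `γτ_γ` on `Lip₀(X, F)`, generated by the seminorms
`f ↦ sup_n αₙ ‖f xₙ - f yₙ‖ / d(xₙ, yₙ)` where `(αₙ)` is a sequence of positive reals
tending to zero and `((xₙ, yₙ))` is a sequence of pairs of distinct points of `X`. -/
def gammaTauGamma : TopologicalSpace (lip0 X x₀ F) :=
  ⨅ (α : ℕ → ℝ) (z : ℕ → X × X)
    (_ : (∀ n, 0 < α n) ∧ Filter.Tendsto α Filter.atTop (nhds 0) ∧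
      ∀ n, (z n).1 ≠ (z n).2),
    TopologicalSpace.induced
      (fun f => UniformFun.ofFun fun n =>
        (α n / dist (z n).1 (z n).2) • (toFun' f (z n).1 - toFun' f (z n).2))
      inferInstance

/-- Evaluation at a point of `X`, as a linear functional on `Lip₀(X)`. -/
def evalLM (x : X) : lip0 X x₀ ℝ →ₗ[ℝ] ℝ where
  toFun f := toFun' f x
  map_add' f g := rfl
  map_smul' c f := rfl

/-- Evaluation at a point of `X`, as a continuous linear functional on `Lip₀(X)`. -/
def evalCLM (x : X) : lip0 X x₀ ℝ →L[ℝ] ℝ :=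
  LinearMap.mkContinuous (evalLM X x₀ x) (dist x x₀)
    (fun f => by
      have h0 : toFun' f x₀ = 0 := apply_base f
      have h := norm_sub_le_lipNorm (x₀ := x₀) f x x₀
      rw [h0, sub_zero] at h
      calc ‖evalLM X x₀ x f‖ ≤ lipNorm X x₀ ℝ f * dist x x₀ := h
        _ = dist x x₀ * ‖f‖ := by rw [lip0_norm_def, mul_comm])

/-- The Lipschitz-free space `F(X)`: the closed linear span of the evaluation
functionals inside the dual of `Lip₀(X)`. -/
def freeSpace : Submodule ℝ (lip0 X x₀ ℝ →L[ℝ] ℝ) :=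
  (Submodule.span ℝ (Set.range (evalCLM X x₀))).topologicalClosure

/-- The Dirac map `δ : X → F(X)`. -/
def deltaF (x : X) : freeSpace X x₀ :=
  ⟨evalCLM X x₀ x,
    Submodule.le_topologicalClosure _ (Submodule.subset_span (Set.mem_range_self x))⟩

/-- For a normed space `G`, the topology on the dual `G'` of uniform convergence on the
convex balanced compact subsets of `G` (the topology of `G'_c`). -/
def dualcTop (G : Type*) [NormedAddCommGroup G] [NormedSpace ℝ G] :
    TopologicalSpace (G →L[ℝ] ℝ) :=
  TopologicalSpace.induced
    (fun φ => UniformOnFun.ofFun {L : Set G | IsCompact L ∧ Convex ℝ L ∧ Balanced ℝ L} ⇑φ)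
    inferInstance


/-! ### Auxiliary development for Statement 4 -/

section Stmt4Aux

variable {Y : Type*} [MetricSpace Y] {y₀ : Y}

lemma toFun'_sub (f g : lip0 Y y₀ ℝ) : toFun' (f - g) = toFun' f - toFun' g := by
  rw [sub_eq_add_neg, toFun'_add, toFun'_neg, sub_eq_add_neg]

lemma toFun'_sum {ι : Type*} (s : Finset ι) (g : ι → lip0 Y y₀ ℝ) (x : Y) :
    toFun' (∑ i ∈ s, g i) x = ∑ i ∈ s, toFun' (g i) x := by
  classical
  induction s using Finset.induction_on with
  | empty => simp [toFun'_zero]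
  | insert _ _ h ih =>
      rw [Finset.sum_insert h, Finset.sum_insert h, toFun'_add, Pi.add_apply, ih]

/-- Admissible sequences of neighborhoods for the mixed topology. -/
def Adm (Y : Type*) [MetricSpace Y] (y₀ : Y) (U : ℕ → Set (lip0 Y y₀ ℝ)) : Prop :=
  ∀ n, U n ∈ @nhds _ (tau0 Y y₀ ℝ) 0 ∧ Convex ℝ (U n) ∧ Balanced ℝ (U n)

/-- The neighborhood filter candidate used to define `tauGamma`. -/
def nF (f : lip0 Y y₀ ℝ) : Filter (lip0 Y y₀ ℝ) :=
  ⨅ (U : ℕ → Set (lip0 Y y₀ ℝ)) (_ : Adm Y y₀ U),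
    Filter.principal ((f + ·) '' gammaSet Y y₀ ℝ U)

lemma tauGamma_eq : tauGamma Y y₀ ℝ = TopologicalSpace.mkOfNhds nF := rfl

lemma continuous_toCM : Continuous[tau0 Y y₀ ℝ, _] (toCM Y y₀ ℝ) :=
  continuous_induced_dom

lemma tau0_hasBasis (f : lip0 Y y₀ ℝ) :
    (@nhds _ (tau0 Y y₀ ℝ) f).HasBasis
      (fun p : Set Y × ℝ => IsCompact p.1 ∧ 0 < p.2)
      (fun p => {g : lip0 Y y₀ ℝ | ∀ x ∈ p.1, ‖toFun' g x - toFun' f x‖ < p.2}) := by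
  letI : TopologicalSpace (lip0 Y y₀ ℝ) := tau0 Y y₀ ℝ
  have hb : (𝓝 (toCM Y y₀ ℝ f)).HasBasis
      (fun p : Set Y × ℝ => IsCompact p.1 ∧ 0 < p.2)
      (fun p => {g : C(Y, ℝ) | ∀ x ∈ p.1, dist (toCM Y y₀ ℝ f x) (g x) < p.2}) :=
    nhds_basis_uniformity' (Metric.uniformity_basis_dist.compactConvergenceUniformity)
  have hn : 𝓝 f = Filter.comap (toCM Y y₀ ℝ) (𝓝 (toCM Y y₀ ℝ f)) := nhds_induced _ _
  rw [hn]
  refine (hb.comap _).congr (fun p => Iff.rfl) (fun p hp => ?_)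
  ext g
  simp only [Set.mem_preimage, Set.mem_setOf_eq]
  refine forall₂_congr fun x hx => ?_
  rw [Real.dist_eq, Real.norm_eq_abs, abs_sub_comm]
  rfl

lemma V0_mem_nhds {K : Set Y} (hK : IsCompact K) {ε : ℝ} (hε : 0 < ε) :
    {g : lip0 Y y₀ ℝ | ∀ x ∈ K, ‖toFun' g x‖ < ε} ∈ @nhds _ (tau0 Y y₀ ℝ) 0 := by
  have := (tau0_hasBasis (0 : lip0 Y y₀ ℝ)).mem_of_mem (i := (K, ε)) ⟨hK, hε⟩
  simpa [toFun'_zero] using this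

lemma exists_V0_subset {W : Set (lip0 Y y₀ ℝ)} (hW : W ∈ @nhds _ (tau0 Y y₀ ℝ) 0) :
    ∃ K : Set Y, IsCompact K ∧ ∃ ε : ℝ, 0 < ε ∧
      {g : lip0 Y y₀ ℝ | ∀ x ∈ K, ‖toFun' g x‖ < ε} ⊆ W := by
  rcases (tau0_hasBasis (0 : lip0 Y y₀ ℝ)).mem_iff.1 hW with ⟨⟨K, ε⟩, ⟨hK, hε⟩, hsub⟩
  refine ⟨K, hK, ε, hε, ?_⟩
  refine Set.Subset.trans (fun g hg => ?_) hsub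
  intro x hx
  simpa [toFun'_zero] using hg x hx

lemma convex_V0 (K : Set Y) (ε : ℝ) :
    Convex ℝ {g : lip0 Y y₀ ℝ | ∀ x ∈ K, ‖toFun' g x‖ < ε} := by
  intro g hg h hh a b ha hb hab
  intro x hx
  have hx1 : toFun' (a • g + b • h) x = a • toFun' g x + b • toFun' h x := by
    rw [toFun'_add, toFun'_smul, toFun'_smul]; rfl
  rw [hx1]
  calc ‖a • toFun' g x + b • toFun' h x‖
      ≤ a * ‖toFun' g x‖ + b * ‖toFun' h x‖ := by
        refine (norm_add_le _ _).trans ?_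
        rw [norm_smul, norm_smul, Real.norm_of_nonneg ha, Real.norm_of_nonneg hb]
    _ ≤ a * max ‖toFun' g x‖ ‖toFun' h x‖ + b * max ‖toFun' g x‖ ‖toFun' h x‖ := by
        gcongr
        · exact le_max_left _ _
        · exact le_max_right _ _
    _ = max ‖toFun' g x‖ ‖toFun' h x‖ := by rw [← add_mul, hab, one_mul]
    _ < ε := max_lt (hg x hx) (hh x hx)

lemma balanced_V0 (K : Set Y) (ε : ℝ) :
    Balanced ℝ {g : lip0 Y y₀ ℝ | ∀ x ∈ K, ‖toFun' g x‖ < ε} := by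
  intro a ha
  rintro _ ⟨g, hg, rfl⟩
  intro x hx
  have : toFun' (a • g) x = a • toFun' g x := by rw [toFun'_smul]; rfl
  rw [this, norm_smul]
  exact lt_of_le_of_lt (mul_le_of_le_one_left (norm_nonneg _) ha) (hg x hx)

lemma sum_sets_mono {ι : Type*} {s : Finset ι} {S T : ι → Set (lip0 Y y₀ ℝ)}
    (h : ∀ i, S i ⊆ T i) : ∑ i ∈ s, S i ⊆ ∑ i ∈ s, T i := by
  intro g hg
  rw [Set.mem_finset_sum] at hg ⊢
  rcases hg with ⟨gi, hgi, rfl⟩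
  exact ⟨gi, fun {i} hi => h _ (hgi hi), rfl⟩

lemma gammaSet_mono {U U' : ℕ → Set (lip0 Y y₀ ℝ)} (h : ∀ n, U n ⊆ U' n) :
    gammaSet Y y₀ ℝ U ⊆ gammaSet Y y₀ ℝ U' :=
  Set.iUnion_mono fun _ =>
    sum_sets_mono fun i => Set.inter_subset_inter_left _ (h i)

lemma mem_nF_iff {f : lip0 Y y₀ ℝ} {S : Set (lip0 Y y₀ ℝ)} :
    S ∈ nF f ↔ ∃ U, Adm Y y₀ U ∧ (f + ·) '' gammaSet Y y₀ ℝ U ⊆ S := by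
  have hne : Nonempty {U : ℕ → Set (lip0 Y y₀ ℝ) // Adm Y y₀ U} :=
    ⟨⟨fun _ => Set.univ, fun _ => ⟨Filter.univ_mem, convex_univ, balanced_univ⟩⟩⟩
  have hdir : Directed (· ≥ ·)
      (fun U : {U : ℕ → Set (lip0 Y y₀ ℝ) // Adm Y y₀ U} =>
        Filter.principal ((f + ·) '' gammaSet Y y₀ ℝ U.1)) := by
    rintro ⟨U, hU⟩ ⟨U', hU'⟩
    refine ⟨⟨fun n => U n ∩ U' n, fun n =>
      ⟨Filter.inter_mem (hU n).1 (hU' n).1, (hU n).2.1.inter (hU' n).2.1,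
        (hU n).2.2.inter (hU' n).2.2⟩⟩, ?_, ?_⟩
    · exact Filter.principal_mono.2
        (Set.image_mono (gammaSet_mono fun n => Set.inter_subset_left))
    · exact Filter.principal_mono.2
        (Set.image_mono (gammaSet_mono fun n => Set.inter_subset_right))
  rw [nF, iInf_subtype']
  rw [Filter.mem_iInf_of_directed hdir]
  constructor
  · rintro ⟨⟨U, hU⟩, hS⟩
    exact ⟨U, hU, Filter.mem_principal.1 hS⟩
  · rintro ⟨U, hU, hS⟩
    exact ⟨⟨U, hU⟩, Filter.mem_principal.2 hS⟩

lemma isOpen_tauGamma_of {S : Set (lip0 Y y₀ ℝ)}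
    (h : ∀ f ∈ S, ∃ U, Adm Y y₀ U ∧ (f + ·) '' gammaSet Y y₀ ℝ U ⊆ S) :
    @IsOpen _ (tauGamma Y y₀ ℝ) S := by
  rw [tauGamma_eq]
  show ∀ f ∈ S, S ∈ nF f
  intro f hf
  exact mem_nF_iff.2 (h f hf)

lemma exists_gamma_subset_of_mem_nhds {f : lip0 Y y₀ ℝ} {V : Set (lip0 Y y₀ ℝ)}
    (hV : V ∈ @nhds _ (tauGamma Y y₀ ℝ) f) :
    ∃ U, Adm Y y₀ U ∧ (f + ·) '' gammaSet Y y₀ ℝ U ⊆ V := by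
  letI := tauGamma Y y₀ ℝ
  rcases mem_nhds_iff.1 hV with ⟨S, hSV, hSopen, hfS⟩
  rw [tauGamma_eq] at hSopen
  have hS : S ∈ nF f := hSopen f hfS
  rcases mem_nF_iff.1 hS with ⟨U, hU, hsub⟩
  exact ⟨U, hU, hsub.trans hSV⟩

lemma zero_mem_of_adm {U : ℕ → Set (lip0 Y y₀ ℝ)} (hU : Adm Y y₀ U) (n : ℕ) :
    (0 : lip0 Y y₀ ℝ) ∈ U n := by
  letI := tau0 Y y₀ ℝ
  exact mem_of_mem_nhds (hU n).1

lemma single_mem_gammaSet {U : ℕ → Set (lip0 Y y₀ ℝ)} (hU : Adm Y y₀ U)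
    {g : lip0 Y y₀ ℝ} {n : ℕ} (hg : g ∈ U n) (hn : ‖g‖ ≤ 2 ^ n) :
    g ∈ gammaSet Y y₀ ℝ U := by
  classical
  refine Set.mem_iUnion.2 ⟨n, ?_⟩
  rw [Set.mem_finset_sum]
  refine ⟨fun i => if i = n then g else 0, fun {i} hi => ?_, ?_⟩
  · by_cases h : i = n
    · subst h; simp only [if_pos rfl]; exact ⟨hg, hn⟩
    · simp only [if_neg h]
      refine ⟨zero_mem_of_adm hU i, ?_⟩
      simp only [Set.mem_setOf_eq, norm_zero]
      positivity
  · rw [Finset.sum_ite_eq' (Finset.range (n + 1)) n (fun _ => g)]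
    simp

lemma sum_halfpow (m : ℕ) :
    ∑ i ∈ Finset.range m, (2⁻¹ : ℝ) ^ (i + 1) = 1 - (2⁻¹) ^ m := by
  induction m with
  | zero => simp
  | succ m ih => rw [Finset.sum_range_succ, ih, pow_succ]; ring

lemma tauGamma_le_tau0 : tauGamma Y y₀ ℝ ≤ tau0 Y y₀ ℝ := by
  rw [TopologicalSpace.le_def]
  intro S hS
  apply isOpen_tauGamma_of
  intro f hf
  have hSn : S ∈ @nhds _ (tau0 Y y₀ ℝ) f := by
    letI := tau0 Y y₀ ℝ
    exact hS.mem_nhds hf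
  rcases (tau0_hasBasis f).mem_iff.1 hSn with ⟨⟨K, ε⟩, ⟨hK, hε⟩, hsub⟩
  refine ⟨fun i => {g : lip0 Y y₀ ℝ | ∀ x ∈ K, ‖toFun' g x‖ < ε * (2⁻¹) ^ (i + 1)},
    fun i => ⟨V0_mem_nhds hK (by positivity), convex_V0 _ _, balanced_V0 _ _⟩, ?_⟩
  rintro _ ⟨g, hg, rfl⟩
  apply hsub
  rcases Set.mem_iUnion.1 hg with ⟨n, hgn⟩
  rw [Set.mem_finset_sum] at hgn
  rcases hgn with ⟨gi, hgi, hgsum⟩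
  intro x hx
  have hx1 : toFun' (f + g) x - toFun' f x = toFun' g x := by
    rw [toFun'_add]; simp
  rw [hx1, ← hgsum, toFun'_sum]
  calc ‖∑ i ∈ Finset.range (n + 1), toFun' (gi i) x‖
      ≤ ∑ i ∈ Finset.range (n + 1), ‖toFun' (gi i) x‖ := norm_sum_le _ _
    _ < ∑ i ∈ Finset.range (n + 1), ε * (2⁻¹) ^ (i + 1) := by
        refine Finset.sum_lt_sum_of_nonempty Finset.nonempty_range_add_one fun i hi => ?_
        exact (hgi hi).1 x hx
    _ = ε * (1 - (2⁻¹) ^ (n + 1)) := by rw [← Finset.mul_sum, sum_halfpow]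
    _ < ε * 1 := by
        refine mul_lt_mul_of_pos_left ?_ hε
        have : (0 : ℝ) < (2⁻¹) ^ (n + 1) := by positivity
        linarith
    _ = ε := mul_one ε

/-- The difference quotient of `f` at the pair `z`. -/
def rat (z : Y × Y) (f : lip0 Y y₀ ℝ) : ℝ :=
  ‖toFun' f z.1 - toFun' f z.2‖ / dist z.1 z.2

lemma rat_nonneg (z : Y × Y) (f : lip0 Y y₀ ℝ) : 0 ≤ rat z f :=
  div_nonneg (norm_nonneg _) dist_nonneg

lemma rat_le_norm (z : Y × Y) (f : lip0 Y y₀ ℝ) : rat z f ≤ ‖f‖ := by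
  rw [lip0_norm_def]
  exact ratio_le_lipNorm f z

lemma rat_add_le (z : Y × Y) (f g : lip0 Y y₀ ℝ) :
    rat z (f + g) ≤ rat z f + rat z g := by
  by_cases hd : dist z.1 z.2 = 0
  · simp [rat, hd, rat_nonneg]
  · have hd' : 0 < dist z.1 z.2 := lt_of_le_of_ne dist_nonneg (Ne.symm hd)
    rw [rat, rat, rat, ← add_div, div_le_div_iff_of_pos_right hd']
    have : toFun' (f + g) z.1 - toFun' (f + g) z.2 =
        (toFun' f z.1 - toFun' f z.2) + (toFun' g z.1 - toFun' g z.2) := by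
      rw [toFun'_add]; simp [Pi.add_apply]; ring
    rw [this]
    exact norm_add_le _ _

lemma rat_smul (z : Y × Y) (c : ℝ) (f : lip0 Y y₀ ℝ) :
    rat z (c • f) = ‖c‖ * rat z f := by
  have : toFun' (c • f) z.1 - toFun' (c • f) z.2 =
      c • (toFun' f z.1 - toFun' f z.2) := by
    rw [toFun'_smul]; simp only [Pi.smul_apply, smul_eq_mul]; ring
  rw [rat, this, norm_smul, mul_div_assoc, rat]

lemma rat_zero (z : Y × Y) : rat z (0 : lip0 Y y₀ ℝ) = 0 := by
  simp [rat, toFun'_zero]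

lemma continuous_rat (z : Y × Y) :
    Continuous[tau0 Y y₀ ℝ, _] (fun f : lip0 Y y₀ ℝ => rat z f) := by
  letI := tau0 Y y₀ ℝ
  have h1 : Continuous (fun f : lip0 Y y₀ ℝ => toFun' f z.1) :=
    (continuous_eval_const z.1).comp continuous_toCM
  have h2 : Continuous (fun f : lip0 Y y₀ ℝ => toFun' f z.2) :=
    (continuous_eval_const z.2).comp continuous_toCM
  exact ((h1.sub h2).norm).div_const _

lemma convex_rat_lt (z : Y × Y) (w c : ℝ) (hw : 0 ≤ w) :
    Convex ℝ {g : lip0 Y y₀ ℝ | w * rat z g < c} := by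
  intro g hg h hh a b ha hb hab
  simp only [Set.mem_setOf_eq] at hg hh ⊢
  calc w * rat z (a • g + b • h)
      ≤ w * (rat z (a • g) + rat z (b • h)) :=
        mul_le_mul_of_nonneg_left (rat_add_le _ _ _) hw
    _ = a * (w * rat z g) + b * (w * rat z h) := by
        rw [rat_smul, rat_smul, Real.norm_of_nonneg ha, Real.norm_of_nonneg hb]; ring
    _ ≤ a * max (w * rat z g) (w * rat z h) + b * max (w * rat z g) (w * rat z h) := by
        gcongr
        · exact le_max_left _ _
        · exact le_max_right _ _
    _ = max (w * rat z g) (w * rat z h) := by rw [← add_mul, hab, one_mul]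
    _ < c := max_lt hg hh

lemma balanced_rat_lt (z : Y × Y) (w c : ℝ) (hw : 0 ≤ w) :
    Balanced ℝ {g : lip0 Y y₀ ℝ | w * rat z g < c} := by
  intro a ha
  rintro _ ⟨g, hg, rfl⟩
  simp only [Set.mem_setOf_eq] at hg ⊢
  rw [rat_smul]
  calc w * (‖a‖ * rat z g) ≤ w * rat z g := by
        rw [← mul_assoc, mul_comm w ‖a‖, mul_assoc]
        exact mul_le_of_le_one_left (mul_nonneg hw (rat_nonneg _ _)) ha
    _ < c := hg

/-- The seminorm `sup_n 2⁻ⁿ · rat (z n)`. -/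
def psup (z : ℕ → Y × Y) (f : lip0 Y y₀ ℝ) : ℝ :=
  ⨆ n : ℕ, (2⁻¹ : ℝ) ^ n * rat (z n) f

lemma psup_term_le_norm (z : ℕ → Y × Y) (f : lip0 Y y₀ ℝ) (n : ℕ) :
    (2⁻¹ : ℝ) ^ n * rat (z n) f ≤ ‖f‖ := by
  calc (2⁻¹ : ℝ) ^ n * rat (z n) f ≤ 1 * rat (z n) f := by
        refine mul_le_mul_of_nonneg_right ?_ (rat_nonneg _ _)
        exact pow_le_one₀ (by norm_num) (by norm_num)
    _ = rat (z n) f := one_mul _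
    _ ≤ ‖f‖ := rat_le_norm _ _

lemma psup_bddAbove (z : ℕ → Y × Y) (f : lip0 Y y₀ ℝ) :
    BddAbove (Set.range fun n : ℕ => (2⁻¹ : ℝ) ^ n * rat (z n) f) :=
  ⟨‖f‖, by rintro r ⟨n, rfl⟩; exact psup_term_le_norm z f n⟩

lemma psup_le_norm (z : ℕ → Y × Y) (f : lip0 Y y₀ ℝ) : psup z f ≤ ‖f‖ :=
  ciSup_le (psup_term_le_norm z f)

lemma term_le_psup (z : ℕ → Y × Y) (f : lip0 Y y₀ ℝ) (n : ℕ) :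
    (2⁻¹ : ℝ) ^ n * rat (z n) f ≤ psup z f :=
  le_ciSup (psup_bddAbove z f) n

lemma psup_nonneg (z : ℕ → Y × Y) (f : lip0 Y y₀ ℝ) : 0 ≤ psup z f :=
  le_trans (mul_nonneg (by positivity) (rat_nonneg _ _)) (term_le_psup z f 0)

lemma psup_zero (z : ℕ → Y × Y) : psup z (0 : lip0 Y y₀ ℝ) = 0 :=
  le_antisymm (by simpa using psup_le_norm z 0) (psup_nonneg z 0)

lemma psup_add_le (z : ℕ → Y × Y) (f g : lip0 Y y₀ ℝ) :
    psup z (f + g) ≤ psup z f + psup z g := by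
  refine ciSup_le fun n => ?_
  calc (2⁻¹ : ℝ) ^ n * rat (z n) (f + g)
      ≤ (2⁻¹ : ℝ) ^ n * (rat (z n) f + rat (z n) g) := by
        refine mul_le_mul_of_nonneg_left (rat_add_le _ _ _) (by positivity)
    _ = (2⁻¹ : ℝ) ^ n * rat (z n) f + (2⁻¹ : ℝ) ^ n * rat (z n) g := mul_add _ _ _
    _ ≤ psup z f + psup z g := add_le_add (term_le_psup z f n) (term_le_psup z g n)

lemma psup_sum_le (z : ℕ → Y × Y) {ι : Type*} (s : Finset ι) (g : ι → lip0 Y y₀ ℝ) :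
    psup z (∑ i ∈ s, g i) ≤ ∑ i ∈ s, psup z (g i) := by
  classical
  induction s using Finset.induction_on with
  | empty => simp [psup_zero]
  | insert _ _ h ih =>
      rw [Finset.sum_insert h, Finset.sum_insert h]
      exact (psup_add_le _ _ _).trans (add_le_add le_rfl ih)

lemma isOpen_psup_lt (z : ℕ → Y × Y) (r : ℝ) :
    @IsOpen _ (tauGamma Y y₀ ℝ) {f : lip0 Y y₀ ℝ | psup z f < r} := by
  apply isOpen_tauGamma_of
  intro f hf
  set δ : ℝ := r - psup z f with hδdef
  have hδ : 0 < δ := sub_pos.2 hf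
  -- choose truncation indices
  have hNex : ∀ i : ℕ, ∃ N : ℕ, (2 : ℝ) ^ i * (2⁻¹) ^ N < δ * (2⁻¹) ^ (i + 2) := by
    intro i
    obtain ⟨N, hN⟩ := exists_pow_lt_of_lt_one
      (show (0 : ℝ) < δ * (2⁻¹) ^ (i + 2) / 2 ^ i from
        div_pos (mul_pos hδ (by positivity)) (by positivity))
      (show (2⁻¹ : ℝ) < 1 by norm_num)
    refine ⟨N, ?_⟩
    have h2 : (0 : ℝ) < 2 ^ i := by positivity
    calc (2 : ℝ) ^ i * (2⁻¹) ^ N < 2 ^ i * (δ * (2⁻¹) ^ (i + 2) / 2 ^ i) := by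
          exact mul_lt_mul_of_pos_left hN h2
      _ = δ * (2⁻¹) ^ (i + 2) := by rw [mul_comm, div_mul_cancel₀ _ (ne_of_gt h2)]
  choose N hN using hNex
  set U : ℕ → Set (lip0 Y y₀ ℝ) := fun i =>
    ⋂ n ∈ Finset.range (N i), {g : lip0 Y y₀ ℝ |
      (2⁻¹ : ℝ) ^ n * rat (z n) g < δ * (2⁻¹) ^ (i + 2)} with hUdef
  have hAdm : Adm Y y₀ U := by
    intro i
    refine ⟨?_, ?_, ?_⟩
    · letI := tau0 Y y₀ ℝ
      have hop : IsOpen (U i) := by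
        refine isOpen_biInter_finset fun n _ => ?_
        exact isOpen_lt (continuous_const.mul (continuous_rat (z n))) continuous_const
      refine hop.mem_nhds ?_
      refine Set.mem_iInter₂.2 fun n _ => ?_
      simp only [Set.mem_setOf_eq, rat_zero, mul_zero]
      exact mul_pos hδ (by positivity)
    · exact convex_iInter₂ fun n _ => convex_rat_lt (z n) _ _ (by positivity)
    · intro a ha
      rintro _ ⟨g, hg, rfl⟩
      refine Set.mem_iInter₂.2 fun n hn => ?_
      exact balanced_rat_lt (z n) _ _ (by positivity) a ha
        ⟨g, Set.mem_iInter₂.1 hg n hn, rfl⟩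
  refine ⟨U, hAdm, ?_⟩
  rintro _ ⟨g, hg, rfl⟩
  simp only [Set.mem_setOf_eq]
  have hpg : psup z g < δ := by
    rcases Set.mem_iUnion.1 hg with ⟨n, hgn⟩
    rw [Set.mem_finset_sum] at hgn
    rcases hgn with ⟨gi, hgi, hgsum⟩
    have hterm : ∀ i ∈ Finset.range (n + 1), psup z (gi i) ≤ δ * (2⁻¹) ^ (i + 2) := by
      intro i hi
      rcases hgi hi with ⟨hUi, hball⟩
      refine ciSup_le fun m => ?_
      by_cases hm : m < N i
      · exact le_of_lt (Set.mem_iInter₂.1 hUi m (Finset.mem_range.2 hm))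
      · push_neg at hm
        have h1 : (2⁻¹ : ℝ) ^ m * rat (z m) (gi i) ≤ (2⁻¹ : ℝ) ^ m * ‖gi i‖ :=
          mul_le_mul_of_nonneg_left (rat_le_norm _ _) (by positivity)
        have h2 : (2⁻¹ : ℝ) ^ m * ‖gi i‖ ≤ (2⁻¹ : ℝ) ^ (N i) * 2 ^ i := by
          have hb : ‖gi i‖ ≤ 2 ^ i := hball
          have hp : (2⁻¹ : ℝ) ^ m ≤ (2⁻¹ : ℝ) ^ (N i) :=
            pow_le_pow_of_le_one (by norm_num) (by norm_num) hm
          calc (2⁻¹ : ℝ) ^ m * ‖gi i‖ ≤ (2⁻¹ : ℝ) ^ (N i) * ‖gi i‖ :=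
                mul_le_mul_of_nonneg_right hp (norm_nonneg _)
            _ ≤ (2⁻¹ : ℝ) ^ (N i) * 2 ^ i :=
                mul_le_mul_of_nonneg_left hb (by positivity)
        have h3 : (2⁻¹ : ℝ) ^ (N i) * 2 ^ i < δ * (2⁻¹) ^ (i + 2) := by
          rw [mul_comm]; exact hN i
        exact le_of_lt (lt_of_le_of_lt (h1.trans h2) h3)
    calc psup z g = psup z (∑ i ∈ Finset.range (n + 1), gi i) := by rw [hgsum]
      _ ≤ ∑ i ∈ Finset.range (n + 1), psup z (gi i) := psup_sum_le _ _ _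
      _ ≤ ∑ i ∈ Finset.range (n + 1), δ * (2⁻¹) ^ (i + 2) := Finset.sum_le_sum hterm
      _ = δ * (2⁻¹ * ∑ i ∈ Finset.range (n + 1), (2⁻¹ : ℝ) ^ (i + 1)) := by
          have hc : ∀ i ∈ Finset.range (n + 1),
              δ * (2⁻¹ : ℝ) ^ (i + 2) = δ * (2⁻¹ * (2⁻¹ : ℝ) ^ (i + 1)) := by
            intro i _; ring
          rw [Finset.sum_congr rfl hc, ← Finset.mul_sum, ← Finset.mul_sum]
      _ ≤ δ * (2⁻¹ * 1) := by
          refine mul_le_mul_of_nonneg_left ?_ (le_of_lt hδ)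
          refine mul_le_mul_of_nonneg_left ?_ (by norm_num)
          rw [sum_halfpow]
          have : (0 : ℝ) < (2⁻¹) ^ (n + 1) := by positivity
          linarith
      _ < δ := by linarith
  have := psup_add_le z f g
  linarith

lemma key_unbounded {B : Set (lip0 Y y₀ ℝ)} (hB : ¬ NormBounded Y y₀ ℝ B) :
    ∃ z : ℕ → Y × Y,
      (∀ r : ℝ, @IsOpen _ (tauGamma Y y₀ ℝ) {f : lip0 Y y₀ ℝ | psup z f < r}) ∧
      (∀ M : ℝ, ∃ f ∈ B, M < psup z f) := by
  haveI : Nonempty (Y × Y) := nonempty_pairs y₀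
  have hB' : ∀ C : ℝ, ∃ f ∈ B, C < ‖f‖ := by
    intro C
    by_contra h
    push_neg at h
    exact hB ⟨C, fun f hf => h f hf⟩
  have h4 : ∀ n : ℕ, ∃ f ∈ B, (4 : ℝ) ^ n < ‖f‖ := fun n => hB' ((4 : ℝ) ^ n)
  choose F hFB hF using h4
  have hz : ∀ n : ℕ, ∃ p : Y × Y, (4 : ℝ) ^ n < rat p (F n) := by
    intro n
    have h := hF n
    rw [lip0_norm_def, lipNorm] at h
    exact exists_lt_of_lt_ciSup h
  choose z hz4 using hz
  refine ⟨z, isOpen_psup_lt z, ?_⟩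
  intro M
  obtain ⟨n, hn⟩ := pow_unbounded_of_one_lt (R := ℝ) M one_lt_two
  refine ⟨F n, hFB n, ?_⟩
  have h1 : (2 : ℝ) ^ n < (2⁻¹ : ℝ) ^ n * rat (z n) (F n) := by
    have h2 : (2⁻¹ : ℝ) ^ n * (4 : ℝ) ^ n = 2 ^ n := by
      rw [← mul_pow]; norm_num
    calc (2 : ℝ) ^ n = (2⁻¹ : ℝ) ^ n * (4 : ℝ) ^ n := h2.symm
      _ < (2⁻¹ : ℝ) ^ n * rat (z n) (F n) :=
          mul_lt_mul_of_pos_left (hz4 n) (by positivity)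
  exact lt_trans hn (lt_of_lt_of_le h1 (term_le_psup z (F n) n))

lemma normBounded_of_isCompact {B : Set (lip0 Y y₀ ℝ)}
    (hB : @IsCompact _ (tauGamma Y y₀ ℝ) B) : NormBounded Y y₀ ℝ B := by
  by_contra h
  obtain ⟨z, hop, hub⟩ := key_unbounded h
  letI := tauGamma Y y₀ ℝ
  have hcover : B ⊆ ⋃ m : ℕ, {f : lip0 Y y₀ ℝ | psup z f < (m : ℝ)} := by
    intro f _
    obtain ⟨m, hm⟩ := exists_nat_gt (psup z f)
    exact Set.mem_iUnion.2 ⟨m, hm⟩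
  obtain ⟨t, ht⟩ := hB.elim_finite_subcover
      (fun m : ℕ => {f : lip0 Y y₀ ℝ | psup z f < (m : ℝ)}) (fun m => hop m) hcover
  set M : ℕ := t.sup id with hM
  obtain ⟨f, hfB, hf⟩ := hub (M : ℝ)
  obtain ⟨m, hmt, hfm⟩ := Set.mem_iUnion₂.1 (ht hfB)
  have h1 : (m : ℝ) ≤ (M : ℝ) := Nat.cast_le.2 (Finset.le_sup (f := id) hmt)
  have h2 : psup z f < (m : ℝ) := hfm
  linarith

lemma normBounded_of_totallyBounded {B : Set (lip0 Y y₀ ℝ)}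
    (h : ∀ V ∈ @nhds _ (tauGamma Y y₀ ℝ) 0,
      ∃ A : Finset (lip0 Y y₀ ℝ), B ⊆ ↑A + V) : NormBounded Y y₀ ℝ B := by
  by_contra hb
  obtain ⟨z, hop, hub⟩ := key_unbounded hb
  letI := tauGamma Y y₀ ℝ
  have hV : {f : lip0 Y y₀ ℝ | psup z f < 1} ∈ 𝓝 (0 : lip0 Y y₀ ℝ) :=
    (hop 1).mem_nhds (by simp [psup_zero])
  obtain ⟨A, hA⟩ := h _ hV
  set C : ℝ := ∑ a ∈ A, |psup z a| with hC
  have hCb : ∀ a ∈ A, psup z a ≤ C := by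
    intro a ha
    refine le_trans (le_abs_self _) ?_
    exact Finset.single_le_sum (fun b _ => abs_nonneg (psup z b)) ha
  obtain ⟨f, hfB, hf⟩ := hub (C + 1)
  obtain ⟨a, haA, v, hv, hav⟩ := Set.mem_add.1 (hA hfB)
  have h1 : psup z f ≤ psup z a + psup z v := by
    rw [← hav]; exact psup_add_le z a v
  have h2 : psup z v < 1 := hv
  have h3 : psup z a ≤ C := hCb a haA
  linarith

lemma isCompact_tau0_of_tauGamma {B : Set (lip0 Y y₀ ℝ)}
    (hB : @IsCompact _ (tauGamma Y y₀ ℝ) B) : @IsCompact _ (tau0 Y y₀ ℝ) B := by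
  have h : @Continuous _ _ (tauGamma Y y₀ ℝ) (tau0 Y y₀ ℝ) id :=
    continuous_id_of_le tauGamma_le_tau0
  simpa using @IsCompact.image _ _ (tauGamma Y y₀ ℝ) (tau0 Y y₀ ℝ) B id hB h

lemma isCompact_tauGamma_of_bounded {B : Set (lip0 Y y₀ ℝ)} {C : ℝ}
    (hC : ∀ f ∈ B, ‖f‖ ≤ C) (hB : @IsCompact _ (tau0 Y y₀ ℝ) B) :
    @IsCompact _ (tauGamma Y y₀ ℝ) B := by
  letI := tau0 Y y₀ ℝ
  have hcont : @ContinuousOn _ _ (tau0 Y y₀ ℝ) (tauGamma Y y₀ ℝ) id B := by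
    intro f hfB
    have hC0 : 0 ≤ C := (norm_nonneg f).trans (hC f hfB)
    show Filter.Tendsto id (nhdsWithin f B) (@nhds _ (tauGamma Y y₀ ℝ) (id f))
    rw [Filter.tendsto_id']
    intro V hV
    obtain ⟨U, hU, hsub⟩ := exists_gamma_subset_of_mem_nhds hV
    obtain ⟨n, hn⟩ := pow_unbounded_of_one_lt (R := ℝ) (2 * C) one_lt_two
    obtain ⟨K, hK, ε, hε, hV0⟩ := exists_V0_subset (hU n).1
    have hN : {g : lip0 Y y₀ ℝ | ∀ x ∈ K, ‖toFun' g x - toFun' f x‖ < ε} ∈ 𝓝 f :=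
      (tau0_hasBasis f).mem_of_mem (i := (K, ε)) ⟨hK, hε⟩
    refine Filter.mem_of_superset
      (Filter.inter_mem (mem_nhdsWithin_of_mem_nhds hN) self_mem_nhdsWithin) ?_
    rintro g ⟨hgN, hgB⟩
    have hgf : g - f ∈ U n := by
      apply hV0
      intro x hx
      have : toFun' (g - f) x = toFun' g x - toFun' f x := by
        rw [toFun'_sub]; rfl
      rw [this]
      exact hgN x hx
    have hnorm : ‖g - f‖ ≤ 2 ^ n := by
      refine le_trans (norm_sub_le _ _) (le_trans ?_ (le_of_lt hn))
      have := hC g hgB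
      have := hC f hfB
      linarith
    have : g - f ∈ gammaSet Y y₀ ℝ U := single_mem_gammaSet hU hgf hnorm
    exact hsub ⟨g - f, this, by simp⟩
  simpa using @IsCompact.image_of_continuousOn _ _ (tau0 Y y₀ ℝ) (tauGamma Y y₀ ℝ) B id hB hcont

lemma t2_tau0 : @T2Space (lip0 Y y₀ ℝ) (tau0 Y y₀ ℝ) := by
  letI := tau0 Y y₀ ℝ
  refine T2Space.of_injective_continuous (f := toCM Y y₀ ℝ) ?_ continuous_toCM
  intro f g h
  have hfg : toFun' f = toFun' g := by
    funext x
    exact DFunLike.congr_fun h x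
  exact Subtype.ext hfg

lemma isClosed_ball_tau0 {C : ℝ} (hC : 0 ≤ C) :
    @IsClosed _ (tau0 Y y₀ ℝ) {f : lip0 Y y₀ ℝ | ‖f‖ ≤ C} := by
  letI := tau0 Y y₀ ℝ
  haveI : Nonempty (Y × Y) := nonempty_pairs y₀
  have hset : {f : lip0 Y y₀ ℝ | ‖f‖ ≤ C} =
      ⋂ p : Y × Y, {f : lip0 Y y₀ ℝ |
        ‖toFun' f p.1 - toFun' f p.2‖ ≤ C * dist p.1 p.2} := by
    ext f
    simp only [Set.mem_iInter, Set.mem_setOf_eq]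
    constructor
    · intro h p
      have h1 := norm_sub_le_lipNorm (x₀ := y₀) f p.1 p.2
      rw [← lip0_norm_def] at h1
      exact h1.trans (mul_le_mul_of_nonneg_right h dist_nonneg)
    · intro h
      rw [lip0_norm_def]
      refine ciSup_le fun p => ?_
      by_cases hd : dist p.1 p.2 = 0
      · have : p.1 = p.2 := by
          rwa [dist_eq_zero] at hd
        simp [this, hd, hC]
      · have hd' : 0 < dist p.1 p.2 := lt_of_le_of_ne dist_nonneg (Ne.symm hd)
        rw [div_le_iff₀ hd']
        exact h p
  rw [hset]
  refine isClosed_iInter fun p => ?_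
  have h1 : Continuous (fun f : lip0 Y y₀ ℝ => toFun' f p.1) :=
    (continuous_eval_const p.1).comp continuous_toCM
  have h2 : Continuous (fun f : lip0 Y y₀ ℝ => toFun' f p.2) :=
    (continuous_eval_const p.2).comp continuous_toCM
  exact isClosed_le ((h1.sub h2).norm) continuous_const

lemma totallyBounded_tauGamma {B : Set (lip0 Y y₀ ℝ)} {C : ℝ}
    (hC : ∀ f ∈ B, ‖f‖ ≤ C) (hC0 : 0 ≤ C)
    (h0 : ∀ V ∈ @nhds _ (tau0 Y y₀ ℝ) 0, ∃ A : Finset (lip0 Y y₀ ℝ), B ⊆ ↑A + V) :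
    ∀ V ∈ @nhds _ (tauGamma Y y₀ ℝ) 0, ∃ A : Finset (lip0 Y y₀ ℝ), B ⊆ ↑A + V := by
  intro V hV
  obtain ⟨U, hU, hsub⟩ := exists_gamma_subset_of_mem_nhds hV
  have hsub' : gammaSet Y y₀ ℝ U ⊆ V := fun g hg => hsub ⟨g, hg, zero_add g⟩
  obtain ⟨n, hn⟩ := pow_unbounded_of_one_lt (R := ℝ) (2 * C) one_lt_two
  obtain ⟨K, hK, ε, hε, hV0⟩ := exists_V0_subset (hU n).1
  set W : Set (lip0 Y y₀ ℝ) := {g | ∀ x ∈ K, ‖toFun' g x‖ < ε / 2} with hWdef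
  obtain ⟨A, hA⟩ := h0 W (V0_mem_nhds hK (by positivity))
  classical
  set T : lip0 Y y₀ ℝ → lip0 Y y₀ ℝ :=
    fun a => if h : ∃ b, b ∈ B ∧ b - a ∈ W then h.choose else 0 with hTdef
  refine ⟨A.image T, ?_⟩
  intro f hfB
  obtain ⟨a, haA, w, hw, haw⟩ := Set.mem_add.1 (hA hfB)
  have hfa : f - a ∈ W := by
    have : w = f - a := eq_sub_of_add_eq' haw
    rwa [this] at hw
  have hex : ∃ b, b ∈ B ∧ b - a ∈ W := ⟨f, hfB, hfa⟩
  have hTa : T a = hex.choose := dif_pos hex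
  obtain ⟨hbB, hbw⟩ := hex.choose_spec
  have hdiff : f - hex.choose ∈ gammaSet Y y₀ ℝ U := by
    refine single_mem_gammaSet hU (n := n) ?_ ?_
    · apply hV0
      intro x hx
      have h1 : f - hex.choose = (f - a) - (hex.choose - a) := by
        rw [sub_sub_sub_cancel_right]
      have h2 : toFun' (f - hex.choose) x =
          toFun' (f - a) x - toFun' (hex.choose - a) x := by
        rw [h1, toFun'_sub]; rfl
      rw [h2]
      have ha1 := hfa x hx
      have ha2 := hbw x hx
      calc ‖toFun' (f - a) x - toFun' (hex.choose - a) x‖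
          ≤ ‖toFun' (f - a) x‖ + ‖toFun' (hex.choose - a) x‖ := norm_sub_le _ _
        _ < ε / 2 + ε / 2 := add_lt_add ha1 ha2
        _ = ε := by ring
    · refine le_trans (norm_sub_le _ _) (le_trans ?_ (le_of_lt hn))
      have := hC f hfB
      have := hC _ hbB
      linarith
  refine Set.mem_add.2 ⟨T a, ?_, f - hex.choose, hsub' hdiff, ?_⟩
  · exact Finset.mem_coe.2 (Finset.mem_image_of_mem T haA)
  · rw [hTa]; abel

lemma isClosed_tauGamma_of_tau0 {S : Set (lip0 Y y₀ ℝ)}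
    (h : @IsClosed _ (tau0 Y y₀ ℝ) S) : @IsClosed _ (tauGamma Y y₀ ℝ) S := by
  rw [← @isOpen_compl_iff _ _ (tau0 Y y₀ ℝ)] at h
  rw [← @isOpen_compl_iff _ _ (tauGamma Y y₀ ℝ)]
  exact TopologicalSpace.le_def.1 tauGamma_le_tau0 _ h

end Stmt4Aux

/-- A subset of `Lip₀(X)` is `τ_γ`-compact iff it is norm bounded and
`τ₀`-compact; the same holds with "compact" replaced by "precompact" (totally bounded:
for every neighborhood `V` of zero the set is covered by finitely many translates of
`V`) and by "relatively compact" (compact closure). -/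
theorem stmt4 (X : Type*) [MetricSpace X] (x₀ : X) (B : Set (lip0 X x₀ ℝ)) :
    (@IsCompact _ (tauGamma X x₀ ℝ) B ↔
      NormBounded X x₀ ℝ B ∧ @IsCompact _ (tau0 X x₀ ℝ) B) ∧
    ((∀ V ∈ @nhds _ (tauGamma X x₀ ℝ) 0, ∃ A : Finset (lip0 X x₀ ℝ), B ⊆ ↑A + V) ↔
      NormBounded X x₀ ℝ B ∧
        ∀ V ∈ @nhds _ (tau0 X x₀ ℝ) 0, ∃ A : Finset (lip0 X x₀ ℝ), B ⊆ ↑A + V) ∧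
    (@IsCompact _ (tauGamma X x₀ ℝ) (@closure _ (tauGamma X x₀ ℝ) B) ↔
      NormBounded X x₀ ℝ B ∧ @IsCompact _ (tau0 X x₀ ℝ) (@closure _ (tau0 X x₀ ℝ) B)) := by
  refine ⟨⟨?_, ?_⟩, ⟨?_, ?_⟩, ⟨?_, ?_⟩⟩
  · intro h
    exact ⟨normBounded_of_isCompact h, isCompact_tau0_of_tauGamma h⟩
  · rintro ⟨⟨C, hC⟩, h0⟩
    exact isCompact_tauGamma_of_bounded
      (C := max C 0) (fun f hf => (hC f hf).trans (le_max_left _ _)) h0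
  · intro h
    refine ⟨normBounded_of_totallyBounded h,
      fun V hV => h V (nhds_mono tauGamma_le_tau0 hV)⟩
  · rintro ⟨⟨C, hC⟩, h0⟩
    exact totallyBounded_tauGamma (C := max C 0)
      (fun f hf => (hC f hf).trans (le_max_left _ _)) (le_max_right _ _) h0
  · intro h
    have hbdd := normBounded_of_isCompact h
    have h0 := isCompact_tau0_of_tauGamma h
    have hBsub : B ⊆ @closure _ (tauGamma X x₀ ℝ) B :=
      @subset_closure _ (tauGamma X x₀ ℝ) B
    obtain ⟨C, hC⟩ := hbdd
    refine ⟨⟨C, fun f hf => hC f (hBsub hf)⟩, ?_⟩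
    letI := tau0 X x₀ ℝ
    haveI : T2Space (lip0 X x₀ ℝ) := t2_tau0
    have hcl : IsClosed (@closure _ (tauGamma X x₀ ℝ) B) := h0.isClosed
    have hsub : closure B ⊆ @closure _ (tauGamma X x₀ ℝ) B :=
      closure_minimal hBsub hcl
    exact h0.of_isClosed_subset isClosed_closure hsub
  · rintro ⟨⟨C, hC⟩, h0⟩
    letI := tau0 X x₀ ℝ
    have hC' : ∀ f ∈ B, ‖f‖ ≤ max C 0 := fun f hf => (hC f hf).trans (le_max_left _ _)
    have hball : IsClosed {f : lip0 X x₀ ℝ | ‖f‖ ≤ max C 0} :=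
      isClosed_ball_tau0 (le_max_right _ _)
    have hsubball : closure B ⊆ {f : lip0 X x₀ ℝ | ‖f‖ ≤ max C 0} :=
      closure_minimal (fun f hf => hC' f hf) hball
    have hgamma : @IsCompact _ (tauGamma X x₀ ℝ) (closure B) :=
      isCompact_tauGamma_of_bounded (C := max C 0) (fun f hf => hsubball hf) h0
    have hclosed : @IsClosed _ (tauGamma X x₀ ℝ) (closure B) :=
      isClosed_tauGamma_of_tau0 isClosed_closure
    have hsub : @closure _ (tauGamma X x₀ ℝ) B ⊆ closure B :=
      @closure_minimal _ (tauGamma X x₀ ℝ) B (closure B) subset_closure hclosed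
    exact @IsCompact.of_isClosed_subset _ (tauGamma X x₀ ℝ) _ _ hgamma
      (@isClosed_closure _ (tauGamma X x₀ ℝ) B) hsub

end LipApprox
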